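/- Inside a square Q of side length 1/n, consider the region disjoint from the cusp {(t,y) : |y − y₀| ≤ C·|t − t₀|^α}, where (t₀,y₀) ∈ Q, C ≥ 1, and 0 < α ≤ 1. Then Q contains an axis-aligned rectangle disjoint from the cusp whose area is at least c·n^{−1−1/α}, where c > 0 depends only on C and α; one may take a rectangle with side lengths t and 1/(2n) − C·t^α with t = (1/(2Cn(α+1)))^{1/α}. -/

import Mathlib

open MeasureTheory Set Filter Topology

/-- Rectangular distance between two measures on the plane: supremum over axis-aligned
rectangles `[a,b] × [c,d]` of the difference of their measures. -/
noncomputable def dRect (μ ν : Measure (ℝ × ℝ)) : ℝ :=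
  ⨆ r : ℝ × ℝ × ℝ × ℝ,
    |(μ (Icc r.1 r.2.1 ×ˢ Icc r.2.2.1 r.2.2.2)).toReal -
      (ν (Icc r.1 r.2.1 ×ˢ Icc r.2.2.1 r.2.2.2)).toReal|

/-- Star discrepancy: supremum over anchored rectangles `[0,x] × [0,y]`. -/
noncomputable def dStar (μ ν : Measure (ℝ × ℝ)) : ℝ :=
  ⨆ r : ℝ × ℝ,
    |(μ (Icc 0 r.1 ×ˢ Icc 0 r.2)).toReal - (ν (Icc 0 r.1 ×ˢ Icc 0 r.2)).toReal|

/-- A permuton: probability measure on the unit square with uniform marginals. -/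
def IsPermuton (μ : Measure (ℝ × ℝ)) : Prop :=
  IsProbabilityMeasure μ ∧ μ.map Prod.fst = volume.restrict (Icc 0 1) ∧
    μ.map Prod.snd = volume.restrict (Icc 0 1)

/-- The permuton associated with a permutation of `{1, …, n}` (0-indexed here):
density `n` on the union of the base squares. -/
noncomputable def hatPerm (n : ℕ) (π : Equiv.Perm (Fin n)) : Measure (ℝ × ℝ) :=
  (n : ENNReal) • volume.restrict (⋃ i : Fin n,
    Icc (((i : ℕ) : ℝ) / n) ((((i : ℕ) : ℝ) + 1) / n) ×ˢ
      Icc (((π i : ℕ) : ℝ) / n) ((((π i : ℕ) : ℝ) + 1) / n))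

/-- Empirical (uniform) measure on a finite indexed point family. -/
noncomputable def empMeasure {n : ℕ} (P : Fin n → ℝ × ℝ) : Measure (ℝ × ℝ) :=
  (n : ENNReal)⁻¹ • ∑ i, Measure.dirac (P i)

/-- The point set `{(i/n, π(i)/n) : i = 1, …, n}` associated with a permutation. -/
noncomputable def permPts (n : ℕ) (π : Equiv.Perm (Fin n)) : Fin n → ℝ × ℝ :=
  fun i => ((((i : ℕ) : ℝ) + 1) / n, (((π i : ℕ) : ℝ) + 1) / n)

/-- `D_n(μ)`: best rectangular-distance approximation of `μ` by an `n`-permutation. -/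
noncomputable def Dn (n : ℕ) (μ : Measure (ℝ × ℝ)) : ℝ :=
  ⨅ π : Equiv.Perm (Fin n), dRect μ (hatPerm n π)

theorem rectangle_avoiding_cusp (C α : ℝ) (hC : 1 ≤ C) (hα0 : 0 < α) (hα1 : α ≤ 1) :
    ∃ c > 0, ∀ (n : ℕ), 0 < n → ∀ q₁ q₂ t₀ y₀ : ℝ,
      (t₀, y₀) ∈ Icc q₁ (q₁ + 1 / n) ×ˢ Icc q₂ (q₂ + 1 / n) →
      ∃ a b a' b' : ℝ,
        Icc a b ×ˢ Icc a' b' ⊆ Icc q₁ (q₁ + 1 / n) ×ˢ Icc q₂ (q₂ + 1 / n) ∧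
        Disjoint (Icc a b ×ˢ Icc a' b')
          {p : ℝ × ℝ | |p.2 - y₀| ≤ C * |p.1 - t₀| ^ α} ∧
        c * (n : ℝ) ^ (-1 - 1 / α : ℝ) ≤ (b - a) * (b' - a') := by
  have hC0 : (0:ℝ) < C := lt_of_lt_of_le one_pos hC
  have hK : (0:ℝ) < 2 * C * (α + 1) := by nlinarith
  refine ⟨(2 * C * (α + 1)) ^ (-(1/α) : ℝ) * (α / (4 * (α + 1))), ?_, ?_⟩
  · exact mul_pos (Real.rpow_pos_of_pos hK _) (div_pos hα0 (by linarith))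
  intro n hn q₁ q₂ t₀ y₀ hmem
  simp only [Set.mem_prod, Set.mem_Icc] at hmem
  obtain ⟨⟨ht₀l, ht₀r⟩, hy₀l, hy₀r⟩ := hmem
  set N : ℝ := (n : ℝ) with hNdef
  have hN : (0:ℝ) < N := by rw [hNdef]; exact_mod_cast hn
  have hN1 : (1:ℝ) ≤ N := by rw [hNdef]; exact_mod_cast hn
  have hB : (0:ℝ) < 2 * C * (α + 1) * N := by positivity
  set t : ℝ := (2 * C * (α + 1) * N) ^ (-(1/α) : ℝ) with htdef
  have ht : 0 < t := Real.rpow_pos_of_pos hB _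
  have htα : t ^ α = (2 * C * (α + 1) * N)⁻¹ := by
    rw [htdef, ← Real.rpow_mul hB.le,
      show (-(1/α)) * α = -1 by field_simp, Real.rpow_neg_one]
  have htle : t ≤ 1 / (2 * N) := by
    rw [← Real.rpow_le_rpow_iff ht.le (by positivity) hα0, htα]
    have h1 : (2*N) ^ α ≤ (2*N) ^ (1:ℝ) :=
      Real.rpow_le_rpow_of_exponent_le (by linarith) hα1
    rw [Real.rpow_one] at h1
    have h2 : (2*N) ≤ 2 * C * (α + 1) * N := by nlinarith [mul_nonneg hN.le (by nlinarith : (0:ℝ) ≤ C * (α+1) - 1)]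
    have h3 : (1 / (2*N)) ^ α = ((2*N) ^ α)⁻¹ := by
      rw [one_div, Real.inv_rpow (by positivity)]
    rw [h3]
    apply inv_anti₀ (by positivity) (le_trans h1 h2)
  have hCt : C * t ^ α = 1 / (2 * N * (α + 1)) := by
    rw [htα]; field_simp
  have hCtlt : C * t ^ α < 1 / (2 * N) := by
    rw [hCt]
    apply div_lt_div_of_pos_left one_pos (by positivity)
    nlinarith
  obtain ⟨a, b, hab, habQ, habd⟩ :
      ∃ a b : ℝ, b - a = t / 2 ∧ Icc a b ⊆ Icc q₁ (q₁ + 1 / N) ∧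
        ∀ x ∈ Icc a b, |x - t₀| ≤ t / 2 := by
    rcases le_or_gt t₀ (q₁ + 1 / (2 * N)) with h | h
    · refine ⟨t₀, t₀ + t / 2, by ring, Set.Icc_subset_Icc ht₀l ?_, ?_⟩
      · have : 1 / (2*N) + 1 / (2*N) = 1 / N := by ring
        linarith
      · rintro x ⟨hx1, hx2⟩
        rw [abs_le]; constructor <;> linarith
    · refine ⟨t₀ - t / 2, t₀, by ring, Set.Icc_subset_Icc ?_ ht₀r, ?_⟩
      · linarith
      · rintro x ⟨hx1, hx2⟩
        rw [abs_le]; constructor <;> linarith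
  obtain ⟨a', b', hab', habQ', habd'⟩ :
      ∃ a' b' : ℝ, b' - a' = 1 / (2 * N) - C * t ^ α ∧
        Icc a' b' ⊆ Icc q₂ (q₂ + 1 / N) ∧
        ∀ y ∈ Icc a' b', C * t ^ α ≤ |y - y₀| := by
    have hCt0 : 0 < C * t ^ α := by rw [hCt]; positivity
    rcases le_or_gt y₀ (q₂ + 1 / (2 * N)) with h | h
    · refine ⟨y₀ + C * t ^ α, y₀ + 1 / (2 * N), by ring, Set.Icc_subset_Icc (by linarith) ?_, ?_⟩
      · have : 1 / (2*N) + 1 / (2*N) = 1 / N := by ring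
        linarith
      · rintro y ⟨hy1, hy2⟩
        rw [abs_of_nonneg (by linarith)]; linarith
    · refine ⟨y₀ - 1 / (2 * N), y₀ - C * t ^ α, by ring, Set.Icc_subset_Icc ?_ (by linarith), ?_⟩
      · linarith
      · rintro y ⟨hy1, hy2⟩
        rw [abs_of_nonpos (by linarith)]; linarith
  refine ⟨a, b, a', b', Set.prod_mono habQ habQ', ?_, ?_⟩
  · rw [Set.disjoint_left]
    rintro ⟨x, y⟩ ⟨hx, hy⟩ hcusp
    simp only [Set.mem_setOf_eq] at hcusp
    have h1 : |x - t₀| ^ α ≤ (t / 2) ^ α :=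
      Real.rpow_le_rpow (abs_nonneg _) (habd x hx) hα0.le
    have h2 : (t / 2) ^ α < t ^ α :=
      Real.rpow_lt_rpow (by positivity) (by linarith) hα0
    have h3 : C * t ^ α ≤ |y - y₀| := habd' y hy
    nlinarith [Real.rpow_nonneg (abs_nonneg (x - t₀)) α]
  · rw [hab, hab', hCt]
    have hNpow : N ^ (-1 - 1/α : ℝ) = N⁻¹ * N ^ (-(1/α) : ℝ) := by
      rw [show N⁻¹ = N ^ (-1 : ℝ) from (Real.rpow_neg_one N).symm,
        ← Real.rpow_add hN]
      ring_nf
    have htsplit : t = (2 * C * (α + 1)) ^ (-(1/α) : ℝ) * N ^ (-(1/α) : ℝ) := by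
      rw [htdef, Real.mul_rpow hK.le hN.le]
    rw [hNpow, htsplit]
    have hrhs : 1 / (2 * N) - 1 / (2 * N * (α + 1)) = α / (2 * N * (α + 1)) := by
      field_simp
      ring
    rw [hrhs]
    have hP : (0:ℝ) < (2 * C * (α + 1)) ^ (-(1/α) : ℝ) := Real.rpow_pos_of_pos hK _
    have hQ : (0:ℝ) < N ^ (-(1/α) : ℝ) := Real.rpow_pos_of_pos hN _
    apply le_of_eq
    field_simp
    ring
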